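/- Let G=(V,E) be a directed graph, possibly cyclic, and let G^acy be any σ-acyclification of G. Then for all distinct nodes A,B ∈ V and all sets Z ⊆ V\{A,B}, A and B are d-separated given Z in G^acy if and only if A and B are σ-separated given Z in G. -/

import Mathlib

/-- A directed graph (loopless, possibly cyclic). -/
structure DiGraph (V : Type) where
  Edge : V → V → Prop
  loopless : ∀ v, ¬ Edge v v

namespace DiGraph

variable {V : Type}

/-- Reachability by a directed path (possibly of length zero). -/
def reach (G : DiGraph V) : V → V → Prop := Relation.ReflTransGen G.Edge

/-- Ancestors of a set: nodes admitting a directed path (possibly of length zero)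
to some node of the set. -/
def anc (G : DiGraph V) (S : Set V) : Set V := {Z | ∃ s ∈ S, G.reach Z s}

/-- The strongly connected component of a node. -/
def scc (G : DiGraph V) (X : V) : Set V := {Z | G.reach X Z ∧ G.reach Z X}

/-- Descendants: nodes `Z ≠ X` with a directed path from `X` to `Z`. -/
def de (G : DiGraph V) (X : V) : Set V := {Z | Z ≠ X ∧ Relation.TransGen G.Edge X Z}

/-- Children of a node. -/
def ch (G : DiGraph V) (X : V) : Set V := {Z | G.Edge X Z}

/-- A directed graph is acyclic (a DAG) if it has no directed cycles. -/
def Acyclic (G : DiGraph V) : Prop := ∀ v, ¬ Relation.TransGen G.Edge v v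

end DiGraph

/-- A path between `X` and `Y` in `G`: a sequence of `k+2` distinct nodes,
where consecutive nodes are joined by an edge of `G` in one of the two
orientations (recorded by `dir`: `dir i = true` means the edge
`node i → node (i+1)` is used, `dir i = false` means `node (i+1) → node i`). -/
structure GPath {V : Type} (G : DiGraph V) (X Y : V) where
  k : ℕ
  node : Fin (k + 2) → V
  dir : Fin (k + 1) → Bool
  inj : Function.Injective node
  first : node 0 = X
  last : node (Fin.last (k + 1)) = Y
  adj : ∀ i : Fin (k + 1),
    (dir i = true → G.Edge (node i.castSucc) (node i.succ)) ∧
    (dir i = false → G.Edge (node i.succ) (node i.castSucc))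

namespace GPath

variable {V : Type} {G : DiGraph V} {X Y : V}

/-- The `j`-th interior (non-endpoint) node of the path (position `j+1`). -/
def inner (p : GPath G X Y) (j : Fin p.k) : V := p.node j.succ.castSucc

/-- The interior node at position `j+1` is a collider: both incident edges
of the path point into it. -/
def isCollider (p : GPath G X Y) (j : Fin p.k) : Prop :=
  p.dir j.castSucc = true ∧ p.dir j.succ = false

/-- The path is σ-blocked by `S`. -/
def sigmaBlocked (p : GPath G X Y) (S : Set V) : Prop :=
  ∃ j : Fin p.k,
    (p.isCollider j ∧ p.inner j ∉ G.anc S) ∨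
    (¬ p.isCollider j ∧ p.inner j ∈ S ∧
      ((p.dir j.succ = true ∧ p.node j.succ.succ ∉ G.scc (p.inner j)) ∨
       (p.dir j.castSucc = false ∧ p.node j.castSucc.castSucc ∉ G.scc (p.inner j))))

/-- The path is d-blocked by `S`. -/
def dBlocked (p : GPath G X Y) (S : Set V) : Prop :=
  ∃ j : Fin p.k,
    (p.isCollider j ∧ p.inner j ∉ G.anc S) ∨
    (¬ p.isCollider j ∧ p.inner j ∈ S)

end GPath

namespace DiGraph

variable {V : Type}

/-- `X` and `Y` are σ-separated given `S`: every path between them is σ-blocked. -/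
def sigmaSep (G : DiGraph V) (X Y : V) (S : Set V) : Prop :=
  ∀ p : GPath G X Y, p.sigmaBlocked S

/-- `X` and `Y` are d-separated given `S`: every path between them is d-blocked. -/
def dSep (G : DiGraph V) (X Y : V) (S : Set V) : Prop :=
  ∀ p : GPath G X Y, p.dBlocked S

end DiGraph

/-- `Ga` is a σ-acyclification of `G`. -/
def IsAcyclification {V : Type} (G Ga : DiGraph V) : Prop :=
  Ga.Acyclic ∧
  (∀ X Y : V, X ≠ Y → X ∉ G.scc Y → (Ga.Edge X Y ↔ ∃ W ∈ G.scc Y, G.Edge X W)) ∧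
  (∀ X Y : V, X ≠ Y → X ∈ G.scc Y → Xor' (Ga.Edge X Y) (Ga.Edge Y X))

namespace DiGraph

variable {V : Type}

/-- `S` is the observed Markov blanket of `X` (w.r.t. σ-separation) given the
observed node set `Obs`: the minimal set `S ⊆ Obs \ {X}` such that `X` is
σ-separated from every node of `Obs \ (S ∪ {X})` given `S`. -/
def IsSigmaMB (G : DiGraph V) (Obs : Set V) (X : V) (S : Set V) : Prop :=
  S ⊆ Obs \ {X} ∧
  (∀ W ∈ Obs \ (S ∪ {X}), G.sigmaSep X W S) ∧
  (∀ T ⊆ Obs \ {X}, (∀ W ∈ Obs \ (T ∪ {X}), G.sigmaSep X W T) → S ⊆ T)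

/-- `S` is the observed Markov blanket of `X` (w.r.t. d-separation). -/
def IsDMB (G : DiGraph V) (Obs : Set V) (X : V) (S : Set V) : Prop :=
  S ⊆ Obs \ {X} ∧
  (∀ W ∈ Obs \ (S ∪ {X}), G.dSep X W S) ∧
  (∀ T ⊆ Obs \ {X}, (∀ W ∈ Obs \ (T ∪ {X}), G.dSep X W T) → S ⊆ T)

/-- `Z` is a backdoor adjustment set for `(X, Y)`: `Z` avoids `X`, `Y` and the
descendants of `X`, and σ-blocks every backdoor path from `X` to `Y`
(a path whose first edge has an arrowhead into `X`). -/
def IsBackdoorAdjustment (G : DiGraph V) (X Y : V) (Z : Set V) : Prop :=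
  X ∉ Z ∧ Y ∉ Z ∧ Z ∩ G.de X = ∅ ∧
  ∀ p : GPath G X Y, p.dir 0 = false → p.sigmaBlocked Z

end DiGraph

/-- Pre-treatment assumption: the outcome `Y` has no descendants and the
treatment `X` has no children except possibly `Y`. -/
def PreTreatment {V : Type} (G : DiGraph V) (X Y : V) : Prop :=
  G.de Y = ∅ ∧ G.ch X ⊆ {Y}

/-! ### Auxiliary development -/

section Aux

variable {V : Type}

namespace DiGraph

theorem reach_refl (G : DiGraph V) (v : V) : G.reach v v := Relation.ReflTransGen.refl

theorem reach_trans {G : DiGraph V} {a b c : V} (h1 : G.reach a b) (h2 : G.reach b c) :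
    G.reach a c := Relation.ReflTransGen.trans h1 h2

theorem mem_scc_self (G : DiGraph V) (v : V) : v ∈ G.scc v :=
  ⟨G.reach_refl v, G.reach_refl v⟩

theorem mem_scc_symm {G : DiGraph V} {x y : V} (h : x ∈ G.scc y) : y ∈ G.scc x :=
  ⟨h.2, h.1⟩

theorem scc_eq_of_mem {G : DiGraph V} {x y : V} (h : x ∈ G.scc y) : G.scc x = G.scc y := by
  ext z
  constructor
  · rintro ⟨h1, h2⟩
    exact ⟨G.reach_trans h.1 h1, G.reach_trans h2 h.2⟩
  · rintro ⟨h1, h2⟩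
    exact ⟨G.reach_trans h.2 h1, G.reach_trans h2 h.1⟩

theorem anc_of_edge {G : DiGraph V} {S : Set V} {a b : V} (h : G.Edge a b) (hb : b ∈ G.anc S) :
    a ∈ G.anc S := by
  obtain ⟨s, hs, hr⟩ := hb
  exact ⟨s, hs, Relation.ReflTransGen.head h hr⟩

theorem anc_of_reach {G : DiGraph V} {S : Set V} {a b : V} (h : G.reach a b) (hb : b ∈ G.anc S) :
    a ∈ G.anc S := by
  obtain ⟨s, hs, hr⟩ := hb
  exact ⟨s, hs, G.reach_trans h hr⟩

theorem mem_anc_of_mem {G : DiGraph V} {S : Set V} {a : V} (h : a ∈ S) : a ∈ G.anc S :=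
  ⟨a, h, G.reach_refl a⟩

end DiGraph

/-- Edge in direction `d` between `x` and `y`: `d = true` means `x → y`. -/
def EDir (H : DiGraph V) (d : Bool) (x y : V) : Prop :=
  if d then H.Edge x y else H.Edge y x

theorem EDir.ne {H : DiGraph V} {d : Bool} {x y : V} (h : EDir H d x y) : x ≠ y := by
  rintro rfl
  cases d <;> simp [EDir] at h <;> exact H.loopless _ h

/-- Walks: nonempty alternating sequences of adjacent nodes (repetitions allowed). -/
inductive Walk (H : DiGraph V) : V → V → Type where
  | single {x y : V} (d : Bool) (h : EDir H d x y) : Walk H x y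
  | cons {x y z : V} (d : Bool) (h : EDir H d x y) (w : Walk H y z) : Walk H x z

namespace Walk

variable {H : DiGraph V}

def len : ∀ {x z : V}, Walk H x z → ℕ
  | _, _, single _ _ => 1
  | _, _, cons _ _ w => w.len + 1

def nodes : ∀ {x z : V}, Walk H x z → List V
  | x, _, single (y := y) _ _ => [x, y]
  | x, _, cons _ _ w => x :: w.nodes

def nthNode : ∀ {x z : V}, Walk H x z → ℕ → V
  | x, _, single _ _, 0 => x
  | _, _, single (y := y) _ _, _ + 1 => y
  | x, _, cons _ _ _, 0 => x
  | _, _, cons _ _ w, i + 1 => w.nthNode i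

def nthDir : ∀ {x z : V}, Walk H x z → ℕ → Bool
  | _, _, single d _, _ => d
  | _, _, cons d _ _, 0 => d
  | _, _, cons _ _ w, i + 1 => w.nthDir i

def lastPrev : ∀ {x z : V}, Walk H x z → V
  | x, _, single _ _ => x
  | _, _, cons _ _ w => w.lastPrev

def lastHead : ∀ {x z : V}, Walk H x z → Bool
  | _, _, single d _ => d
  | _, _, cons _ _ w => w.lastHead

def firstD : ∀ {x z : V}, Walk H x z → Bool
  | _, _, single d _ => d
  | _, _, cons d _ _ => d

def firstNext : ∀ {x z : V}, Walk H x z → V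
  | _, _, single (y := y) _ _ => y
  | _, _, cons (y := y) _ _ _ => y

def append : ∀ {x y z : V}, Walk H x y → Walk H y z → Walk H x z
  | _, _, _, single d h, w2 => cons d h w2
  | _, _, _, cons d h w, w2 => cons d h (append w w2)

theorem one_le_len {x z : V} (w : Walk H x z) : 1 ≤ w.len := by
  cases w <;> simp [len]

theorem nodes_length {x z : V} (w : Walk H x z) : (nodes w).length = w.len + 1 := by
  induction w with
  | single d h => rfl
  | cons d h w ih => simp [nodes, len, ih]

theorem nodes_ne_nil {x z : V} (w : Walk H x z) : nodes w ≠ [] := by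
  cases w <;> simp [nodes]

theorem nthNode_zero {x z : V} (w : Walk H x z) : w.nthNode 0 = x := by
  cases w <;> rfl

theorem nthNode_len {x z : V} (w : Walk H x z) : w.nthNode w.len = z := by
  induction w with
  | single d h => rfl
  | cons d h w ih => exact ih

theorem nodes_get {x z : V} (w : Walk H x z) (i : ℕ) (h : i < (nodes w).length) :
    (nodes w).get ⟨i, h⟩ = w.nthNode i := by
  induction w generalizing i with
  | single d h' =>
    match i with
    | 0 => rfl
    | 1 => rfl
    | n + 2 => simp only [nodes, List.length_cons, List.length_nil] at h; omega
  | cons d h' w ih =>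
    match i with
    | 0 => rfl
    | i + 1 => exact ih i (by simpa [nodes] using h)

theorem walk_adj {x z : V} (w : Walk H x z) (i : ℕ) (h1 : i < w.len) :
    EDir H (w.nthDir i) (w.nthNode i) (w.nthNode (i + 1)) := by
  induction w generalizing i with
  | single d h =>
    match i with
    | 0 => exact h
    | n + 1 => simp [len] at h1
  | cons d h w ih =>
    match i with
    | 0 => simpa [nthNode, nthDir, nthNode_zero] using h
    | i + 1 => exact ih i (by simpa [len] using h1)

theorem len_append {x y z : V} (w1 : Walk H x y) (w2 : Walk H y z) :
    (w1.append w2).len = w1.len + w2.len := by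
  induction w1 with
  | single d h => simp [append, len, Nat.add_comm]
  | cons d h w ih => simp [append, len, ih w2]; omega

theorem nodes_append {x y z : V} (w1 : Walk H x y) (w2 : Walk H y z) :
    (w1.append w2).nodes = (nodes w1).dropLast ++ nodes w2 := by
  induction w1 with
  | single d h => rfl
  | cons d h w ih =>
    simp only [append, nodes, ih]
    obtain ⟨a, t, ht⟩ : ∃ a t, nodes w = a :: t := by
      cases hw : nodes w with
      | nil => exact absurd hw (nodes_ne_nil w)
      | cons a t => exact ⟨a, t, rfl⟩
    rw [ht]
    simp

theorem lastPrev_append {x y z : V} (w1 : Walk H x y) (w2 : Walk H y z) :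
    (w1.append w2).lastPrev = w2.lastPrev := by
  induction w1 with
  | single d h => rfl
  | cons d h w ih => simpa [append, lastPrev] using ih w2

theorem lastHead_append {x y z : V} (w1 : Walk H x y) (w2 : Walk H y z) :
    (w1.append w2).lastHead = w2.lastHead := by
  induction w1 with
  | single d h => rfl
  | cons d h w ih => simpa [append, lastHead] using ih w2

theorem append_cons {x y y' z : V} (d : Bool) (h : EDir H d x y) (w1 : Walk H y y')
    (w2 : Walk H y' z) : (cons d h w1).append w2 = cons d h (w1.append w2) := rfl

end Walk

end Aux

section Generic

variable {V : Type} {H : DiGraph V} (Anc : Set V) (P Q : V → Bool → V → Prop)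

/-- Condition at an interior node `v` with predecessor `u`, incoming arrowhead `l`
(`l = true` iff the previous edge points into `v`), outgoing arrowhead `rh`
(`rh = true` iff the next edge points into `v`), and successor `w`. -/
def NodeCond (u : V) (l : Bool) (v : V) (rh : Bool) (w : V) : Prop :=
  (l = true ∧ rh = true → v ∈ Anc) ∧ (¬ (l = true ∧ rh = true) → P u l v ∧ Q v rh w)

namespace Walk

/-- All nodes of `w` except the last satisfy their `NodeCond`, where the first
node of `w` has incoming context `(u, l)`. -/
def OpenTail : ∀ {x z : V}, (u : V) → (l : Bool) → Walk H x z → Prop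
  | x, _, u, l, single (y := y) d _ => NodeCond Anc P Q u l x (!d) y
  | x, _, u, l, cons (y := y) d _ w => NodeCond Anc P Q u l x (!d) y ∧ OpenTail x d w

/-- All interior nodes of `w` satisfy their `NodeCond`. -/
def OpenW : ∀ {x z : V}, Walk H x z → Prop
  | _, _, single _ _ => True
  | x, _, cons d _ w => OpenTail Anc P Q x d w

variable {Anc P Q}

theorem openTail_head {x z u : V} {l : Bool} {w : Walk H x z}
    (h : OpenTail Anc P Q u l w) :
    NodeCond Anc P Q u l x (!w.firstD) w.firstNext := by
  cases w with
  | single d h' => exact h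
  | cons d h' w => exact h.1

theorem openTail_congr_head {x z u u' : V} {l l' : Bool} {w : Walk H x z}
    (h : OpenTail Anc P Q u l w)
    (hn : NodeCond Anc P Q u' l' x (!w.firstD) w.firstNext) :
    OpenTail Anc P Q u' l' w := by
  cases w with
  | single d h' => exact hn
  | cons d h' w => exact ⟨hn, h.2⟩

theorem openTail_append {x y z u : V} {l : Bool} (w1 : Walk H x y) (w2 : Walk H y z) :
    OpenTail Anc P Q u l (w1.append w2) ↔
      OpenTail Anc P Q u l w1 ∧ OpenTail Anc P Q w1.lastPrev w1.lastHead w2 := by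
  induction w1 generalizing u l with
  | single d h => rfl
  | cons d h w ih =>
    show NodeCond Anc P Q u l _ (!d) _ ∧ OpenTail Anc P Q _ d (w.append w2) ↔ _
    rw [ih]
    exact and_assoc.symm

theorem openW_of_openTail {x z u : V} {l : Bool} {w : Walk H x z}
    (h : OpenTail Anc P Q u l w) : OpenW Anc P Q w := by
  cases w with
  | single d h' => trivial
  | cons d h' w => exact h.2

theorem openW_append {x y z : V} (w1 : Walk H x y) (w2 : Walk H y z) :
    OpenW Anc P Q (w1.append w2) ↔
      OpenW Anc P Q w1 ∧ OpenTail Anc P Q w1.lastPrev w1.lastHead w2 := by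
  cases w1 with
  | single d h =>
    show OpenTail Anc P Q _ d w2 ↔ _
    simp [OpenW, lastPrev, lastHead]
  | cons d h w =>
    show OpenTail Anc P Q _ d (w.append w2) ↔ _
    rw [openTail_append]
    rfl

/-- Conditions at all interior nodes, indexed. -/
theorem openTail_cond {x z : V} (w : Walk H x z) (u : V) (l : Bool)
    (h : OpenTail Anc P Q u l w) :
    ∀ i, i < w.len →
      NodeCond Anc P Q
        (match i with | 0 => u | j + 1 => w.nthNode j)
        (match i with | 0 => l | j + 1 => w.nthDir j)
        (w.nthNode i) (!(w.nthDir i)) (w.nthNode (i + 1)) := by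
  induction w generalizing u l with
  | single d h' =>
    intro i hi
    match i with
    | 0 => exact h
    | j + 1 => simp [len] at hi
  | cons d h' w ih =>
    intro i hi
    match i with
    | 0 => simpa [nthNode, nthDir, nthNode_zero] using h.1
    | j + 1 =>
      have := ih _ _ h.2 j (by simpa [len] using hi)
      match j with
      | 0 => exact this
      | j + 1 => exact this

theorem openW_cond {x z : V} (w : Walk H x z) (h : OpenW Anc P Q w) :
    ∀ j, j + 1 < w.len →
      NodeCond Anc P Q (w.nthNode j) (w.nthDir j) (w.nthNode (j + 1))
        (!(w.nthDir (j + 1))) (w.nthNode (j + 2)) := by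
  intro j hj
  cases w with
  | single d h' => simp [len] at hj
  | cons d h' w =>
    have := openTail_cond w _ _ h j (by simpa [len] using hj)
    match j with
    | 0 => exact this
    | j + 1 => exact this

end Walk

variable {Anc P Q}

/-- Connectivity: there is an open walk from `A` to `v` whose final edge is between
`u` and `v`, with arrowhead at `v` iff `l = true`.  The condition at `v` itself is
not yet checked. -/
inductive ConW (H : DiGraph V) (Anc : Set V) (P Q : V → Bool → V → Prop) (A : V) :
    V → V → Bool → Prop where
  | head {v : V} (h : H.Edge A v) : ConW H Anc P Q A v A true
  | tail {v : V} (h : H.Edge v A) : ConW H Anc P Q A v A false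
  | out {v u w : V} {l : Bool} (hc : ConW H Anc P Q A v u l) (he : H.Edge v w)
      (hn : NodeCond Anc P Q u l v false w) : ConW H Anc P Q A w v true
  | inn {v u w : V} {l : Bool} (hc : ConW H Anc P Q A v u l) (he : H.Edge w v)
      (hn : NodeCond Anc P Q u l v true w) : ConW H Anc P Q A w v false

theorem conToWalk {A v u : V} {l : Bool} (h : ConW H Anc P Q A v u l) :
    ∃ w : Walk H A v, Walk.OpenW Anc P Q w ∧ w.lastPrev = u ∧ w.lastHead = l := by
  induction h with
  | head h => exact ⟨Walk.single true h, trivial, rfl, rfl⟩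
  | tail h => exact ⟨Walk.single false h, trivial, rfl, rfl⟩
  | out hc he hn ih =>
    obtain ⟨w, hw, hp, hl⟩ := ih
    refine ⟨w.append (Walk.single true he), ?_, ?_, ?_⟩
    · rw [Walk.openW_append]
      refine ⟨hw, ?_⟩
      rw [hp, hl]
      exact hn
    · simp [Walk.lastPrev_append, Walk.lastPrev]
    · simp [Walk.lastHead_append, Walk.lastHead]
  | inn hc he hn ih =>
    obtain ⟨w, hw, hp, hl⟩ := ih
    refine ⟨w.append (Walk.single false he), ?_, ?_, ?_⟩
    · rw [Walk.openW_append]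
      refine ⟨hw, ?_⟩
      rw [hp, hl]
      exact hn
    · simp [Walk.lastPrev_append, Walk.lastPrev]
    · simp [Walk.lastHead_append, Walk.lastHead]

end Generic

section Generic2

variable {V : Type} {H : DiGraph V} {Anc : Set V} {P Q : V → Bool → V → Prop}

open Walk

theorem descent {s t : V} (u : Walk H s t) (pl : V) (ll : Bool)
    (hAncE : ∀ a b : V, H.Edge a b → b ∈ Anc → a ∈ Anc)
    (hO : OpenTail Anc P Q pl ll u) (hd : u.firstD = true) :
    s ∈ Anc ∨ u.lastHead = true := by
  induction u generalizing pl ll with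
  | single d h =>
    right
    exact hd
  | cons d h w ih =>
    have hd' : d = true := hd
    subst hd'
    by_cases hfd : w.firstD = true
    · rcases ih _ _ hO.2 hfd with hy | hl
      · exact Or.inl (hAncE _ _ (by simpa [EDir] using h) hy)
      · exact Or.inr hl
    · have hy := (openTail_head hO.2).1 ⟨rfl, by simp [Bool.not_eq_true] at hfd; simp [hfd]⟩
      exact Or.inl (hAncE _ _ (by simpa [EDir] using h) hy)

theorem junction {A v B : V} (w1 : Walk H A v) (u2 : Walk H v v) (u3 : Walk H v B)
    (hP : ∀ u u' : V, ∀ l' : Bool, ∀ x : V, P u' l' x → P u true x)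
    (hQ : ∀ x : V, ∀ rh' : Bool, ∀ w' w'' : V, Q x rh' w' → Q x true w'')
    (hAncE : ∀ a b : V, H.Edge a b → b ∈ Anc → a ∈ Anc)
    (hO : OpenW Anc P Q (w1.append (u2.append u3))) :
    OpenW Anc P Q (w1.append u3) := by
  rw [openW_append] at hO ⊢
  obtain ⟨h1, h23⟩ := hO
  rw [openTail_append] at h23
  obtain ⟨h2, h3⟩ := h23
  refine ⟨h1, openTail_congr_head h3 ?_⟩
  have NC1 := openTail_head h2
  have NC2 := openTail_head h3
  constructor
  · rintro ⟨hl1, hrh⟩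
    by_cases hfd : u2.firstD = true
    · rcases descent u2 _ _ hAncE h2 hfd with hv | hl
      · exact hv
      · exact NC2.1 ⟨hl, hrh⟩
    · exact NC1.1 ⟨hl1, by simp [Bool.not_eq_true] at hfd; simp [hfd]⟩
  · intro hnc
    constructor
    · by_cases hc1 : w1.lastHead = true ∧ (!u2.firstD) = true
      · have hrh : ¬ ((!u3.firstD) = true) := fun hr => hnc ⟨hc1.1, hr⟩
        have h2' : ¬ (u2.lastHead = true ∧ (!u3.firstD) = true) := fun hh => hrh hh.2
        have := (NC2.2 h2').1
        rw [hc1.1]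
        exact hP _ _ _ _ this
      · exact (NC1.2 hc1).1
    · by_cases hc2 : u2.lastHead = true ∧ (!u3.firstD) = true
      · have hl1 : ¬ (w1.lastHead = true) := fun hl => hnc ⟨hl, hc2.2⟩
        have h1' : ¬ (w1.lastHead = true ∧ (!u2.firstD) = true) := fun hh => hl1 hh.1
        have := (NC1.2 h1').2
        rw [hc2.2]
        exact hQ _ _ _ _ this
      · exact (NC2.2 hc2).2

end Generic2

section Generic3

variable {V : Type} {H : DiGraph V} {Anc : Set V} {P Q : V → Bool → V → Prop}

open Walk

/-- A path is generically open. -/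
def GOpen (Anc : Set V) (P Q : V → Bool → V → Prop) {X Y : V} (p : GPath H X Y) : Prop :=
  ∀ j : Fin p.k,
    NodeCond Anc P Q (p.node j.castSucc.castSucc) (p.dir j.castSucc)
      (p.node j.succ.castSucc) (!p.dir j.succ) (p.node j.succ.succ)

theorem splitAt [DecidableEq V] {x z : V} (w : Walk H x z) (v : V) (hv : v ∈ w.nodes)
    (hx : v ≠ x) :
    (∃ (w1 : Walk H x v) (w2 : Walk H v z), w = w1.append w2 ∧ v ∉ (nodes w1).dropLast) ∨
    (v = z ∧ List.count v w.nodes = 1) := by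
  induction w with
  | single d h =>
    rename_i x' y'
    have hxy : x' ≠ y' := EDir.ne h
    rcases (by simpa [nodes] using hv : v = x' ∨ v = y') with rfl | rfl
    · exact absurd rfl hx
    · right
      refine ⟨rfl, ?_⟩
      show List.count v (x' :: [v]) = 1
      rw [List.count_cons_of_ne hx.symm]
      simp
  | cons d h w ih =>
    rename_i x' y' z'
    have hv' : v ∈ nodes w := by
      rcases (by simpa [nodes] using hv : v = x' ∨ v ∈ nodes w) with rfl | h'
      · exact absurd rfl hx
      · exact h'
    by_cases hvy : v = y'
    · subst hvy
      left
      refine ⟨Walk.single d h, w, rfl, ?_⟩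
      simp [nodes]
      exact hx
    · rcases ih hv' hvy with ⟨w1, w2, heq, hnm⟩ | ⟨rfl, hcnt⟩
      · left
        refine ⟨Walk.cons d h w1, w2, by rw [append_cons, heq], ?_⟩
        obtain ⟨a, t, ht⟩ : ∃ a t, nodes w1 = a :: t := by
          cases hw : nodes w1 with
          | nil => exact absurd hw (nodes_ne_nil w1)
          | cons a t => exact ⟨a, t, rfl⟩
        show v ∉ (x' :: nodes w1).dropLast
        rw [ht, List.dropLast_cons₂]
        rw [ht] at hnm
        simp only [List.mem_cons, not_or] at *
        exact ⟨hx, hnm⟩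
      · right
        refine ⟨rfl, ?_⟩
        show List.count v (x' :: nodes w) = 1
        rw [List.count_cons_of_ne hx.symm, hcnt]

theorem splitEnd [DecidableEq V] {x z : V} (w : Walk H x z) (hxz : x ≠ z)
    (hc : 2 ≤ List.count z w.nodes) :
    ∃ (w1 : Walk H x z) (w2 : Walk H z z), w = w1.append w2 := by
  induction w with
  | single d h =>
    rename_i x' y'
    have hxy : x' ≠ y' := EDir.ne h
    have : List.count y' (nodes (Walk.single (H := H) d h)) ≤ 1 := by
      simp [nodes, List.count_cons, hxy]
    omega
  | cons d h w ih =>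
    rename_i x' y' z'
    have hc' : 2 ≤ List.count z' (nodes w) := by
      rw [show nodes (Walk.cons d h w) = x' :: nodes w from rfl,
        List.count_cons_of_ne hxz] at hc
      exact hc
    by_cases hyz : y' = z'
    · subst hyz
      exact ⟨Walk.single d h, w, rfl⟩
    · obtain ⟨w1, w2, heq⟩ := ih hyz hc'
      exact ⟨Walk.cons d h w1, w2, by rw [append_cons, heq]⟩

theorem walkToPath {A B : V} (w : Walk H A B) (hn : (nodes w).Nodup)
    (hO : OpenW Anc P Q w) : ∃ p : GPath H A B, GOpen Anc P Q p := by
  have h1 := w.one_le_len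
  have hk : w.len - 1 + 1 = w.len := by omega
  have hlen : (nodes w).length = (w.len - 1) + 2 := by rw [nodes_length]; omega
  refine ⟨⟨w.len - 1, fun i => w.nthNode i.val, fun i => w.nthDir i.val, ?_, ?_, ?_, ?_⟩, ?_⟩
  · -- injective
    intro i j hij
    have hi : (i : ℕ) < (nodes w).length := by omega
    have hj : (j : ℕ) < (nodes w).length := by omega
    have := List.nodup_iff_injective_get.mp hn
      (show ((nodes w).get ⟨i, hi⟩) = ((nodes w).get ⟨j, hj⟩) by
        rw [nodes_get, nodes_get]; exact hij)
    exact Fin.ext (by simpa using congrArg Fin.val this)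
  · exact w.nthNode_zero
  · show w.nthNode (w.len - 1 + 1) = B
    rw [hk]; exact w.nthNode_len
  · intro i
    have hadj := walk_adj w i.val (by omega)
    constructor
    · intro hd
      have : EDir H true (w.nthNode i.val) (w.nthNode (i.val + 1)) := hd ▸ hadj
      simpa [EDir] using this
    · intro hd
      have : EDir H false (w.nthNode i.val) (w.nthNode (i.val + 1)) := hd ▸ hadj
      simpa [EDir] using this
  · intro j
    have hj : (j : ℕ) < w.len - 1 := j.isLt
    have := openW_cond w hO j.val (by omega)
    simpa [Fin.coe_castSucc, Fin.val_succ] using this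

theorem openWalkToPath (hAB : A ≠ B)
    (hP : ∀ u u' : V, ∀ l' : Bool, ∀ x : V, P u' l' x → P u true x)
    (hQ : ∀ x : V, ∀ rh' : Bool, ∀ w' w'' : V, Q x rh' w' → Q x true w'')
    (hAncE : ∀ a b : V, H.Edge a b → b ∈ Anc → a ∈ Anc) :
    ∀ n (w : Walk H A B), w.len ≤ n → OpenW Anc P Q w →
      ∃ p : GPath H A B, GOpen Anc P Q p := by
  haveI := Classical.decEq V
  intro n
  induction n using Nat.strong_induction_on with
  | _ n ih =>
    intro w hlen hO
    by_cases hnd : (nodes w).Nodup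
    · exact walkToPath w hnd hO
    · obtain ⟨v, hdup⟩ := List.exists_duplicate_iff_not_nodup.mpr hnd
      have hv2 : 2 ≤ List.count v (nodes w) := List.duplicate_iff_two_le_count.mp hdup
      have hvm : v ∈ nodes w := by
        rw [← List.count_pos_iff]; omega
      by_cases hvA : v = A
      · subst hvA
        cases w with
        | single d h =>
          have : List.count v (nodes (Walk.single (x := v) d h)) ≤ 1 := by
            simp [nodes, List.count_cons, hAB]
          omega
        | cons d h w' =>
          have hAy : v ≠ _ := EDir.ne h
          have hmem : v ∈ nodes w' := by
            rw [← List.count_pos_iff]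
            rw [show nodes (Walk.cons d h w') = v :: nodes w' from rfl] at hv2
            rw [List.count_cons_self] at hv2
            omega
          rcases splitAt w' v hmem hAy with ⟨w1, w2, heq, -⟩ | ⟨hvB', -⟩
          · have hO2 : OpenW Anc P Q w2 := by
              have : OpenTail Anc P Q v d w' := hO
              rw [heq, openTail_append] at this
              exact openW_of_openTail this.2
            have hlt : w2.len < n := by
              have e := len_append w1 w2
              rw [← heq] at e
              have h1 := w1.one_le_len
              have hln : w'.len + 1 ≤ n := hlen
              omega
            exact ih w2.len hlt w2 le_rfl hO2
          · exact absurd hvB' hAB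
      · by_cases hvB : v = B
        · subst hvB
          obtain ⟨w1, w2, heq⟩ := splitEnd w hAB hv2
          have hO1 : OpenW Anc P Q w1 := ((openW_append w1 w2).mp (heq ▸ hO)).1
          have hlt : w1.len < n := by
            have hl2 := w2.one_le_len
            have := len_append w1 w2
            rw [← heq] at this
            omega
          exact ih w1.len hlt w1 le_rfl hO1
        · rcases splitAt w v hvm hvA with ⟨w1, rest, heq, hnm⟩ | ⟨hvB', -⟩
          · have hcnt : 2 ≤ List.count v (nodes rest) := by
              have hnodes : nodes w = (nodes w1).dropLast ++ nodes rest := by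
                rw [heq, nodes_append]
              rw [hnodes, List.count_append,
                List.count_eq_zero_of_not_mem hnm] at hv2
              omega
            cases rest with
            | single d h =>
              have : List.count v (nodes (Walk.single (x := v) d h)) ≤ 1 := by
                simp [nodes, List.count_cons, hvB]
              omega
            | cons d h rest' =>
              have hvy : v ≠ _ := EDir.ne h
              have hmem : v ∈ nodes rest' := by
                rw [← List.count_pos_iff]
                rw [show nodes (Walk.cons d h rest') = v :: nodes rest' from rfl,
                  List.count_cons_self] at hcnt
                omega
              rcases splitAt rest' v hmem hvy with ⟨u2', u3, heq', -⟩ | ⟨hvB', -⟩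
              · have heqw : w = w1.append ((Walk.cons d h u2').append u3) := by
                  rw [heq, heq', append_cons]
                have hO' : OpenW Anc P Q (w1.append u3) :=
                  junction w1 (Walk.cons d h u2') u3 hP hQ hAncE (heqw ▸ hO)
                have hlt : (w1.append u3).len < n := by
                  have e1 := len_append w1 ((Walk.cons d h u2').append u3)
                  have e2 := len_append (Walk.cons d h u2') u3
                  have e3 := len_append w1 u3
                  have e4 : (Walk.cons d h u2').len = u2'.len + 1 := rfl
                  rw [← heqw] at e1
                  have := u2'.one_le_len
                  omega
                exact ih (w1.append u3).len hlt (w1.append u3) le_rfl hO'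
              · exact absurd hvB' hvB
          · exact absurd hvB' hvB

end Generic3

section Generic4

variable {V : Type} {H : DiGraph V} {Anc : Set V} {P Q : V → Bool → V → Prop} {A B : V}

theorem pathToCon (p : GPath H A B) (hO : GOpen Anc P Q p) :
    ∃ u l, ConW H Anc P Q A B u l := by
  classical
  set f : ℕ → V := fun i => if h : i < p.k + 2 then p.node ⟨i, h⟩ else A
  set g : ℕ → Bool := fun i => if h : i < p.k + 1 then p.dir ⟨i, h⟩ else true
  have hfeq : ∀ i (h : i < p.k + 2), f i = p.node ⟨i, h⟩ := fun i h => dif_pos h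
  have hgeq : ∀ i (h : i < p.k + 1), g i = p.dir ⟨i, h⟩ := fun i h => dif_pos h
  have hA : f 0 = A :=
    (hfeq 0 (by omega)).trans
      ((congrArg p.node (show (⟨0, by omega⟩ : Fin (p.k + 2)) = 0 from by ext; simp)).trans
        p.first)
  have hB : f (p.k + 1) = B :=
    (hfeq (p.k + 1) (by omega)).trans
      ((congrArg p.node
        (show (⟨p.k + 1, by omega⟩ : Fin (p.k + 2)) = Fin.last (p.k + 1) from by
          ext; simp [Fin.last])).trans p.last)
  have hadjt : ∀ i, ∀ h : i < p.k + 1, g i = true → H.Edge (f i) (f (i + 1)) := by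
    intro i h hd
    rw [hgeq i h] at hd
    rw [hfeq i (by omega), hfeq (i + 1) (by omega)]
    exact (p.adj ⟨i, h⟩).1 hd
  have hadjf : ∀ i, ∀ h : i < p.k + 1, g i = false → H.Edge (f (i + 1)) (f i) := by
    intro i h hd
    rw [hgeq i h] at hd
    rw [hfeq i (by omega), hfeq (i + 1) (by omega)]
    exact (p.adj ⟨i, h⟩).2 hd
  have hcond : ∀ i, i + 1 < p.k + 1 →
      NodeCond Anc P Q (f i) (g i) (f (i + 1)) (!(g (i + 1))) (f (i + 2)) := by
    intro i h
    rw [hfeq i (by omega), hfeq (i + 1) (by omega), hfeq (i + 2) (by omega),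
      hgeq i (by omega), hgeq (i + 1) (by omega)]
    exact hO ⟨i, by omega⟩
  suffices h : ∀ i : ℕ, i < p.k + 1 → ConW H Anc P Q A (f (i + 1)) (f i) (g i) by
    have hfin := h p.k (by omega)
    rw [hB] at hfin
    exact ⟨_, _, hfin⟩
  intro i
  induction i with
  | zero =>
    intro hi
    rw [hA]
    cases hd : g 0
    · exact ConW.tail (hA ▸ hadjf 0 hi hd)
    · exact ConW.head (hA ▸ hadjt 0 hi hd)
  | succ i ihp =>
    intro hi
    have hprev := ihp (by omega)
    have hc := hcond i hi
    cases hd : g (i + 1)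
    · rw [hd] at hc
      simp only [Bool.not_false] at hc
      exact ConW.inn hprev (hadjf (i + 1) hi hd) hc
    · rw [hd] at hc
      simp only [Bool.not_true] at hc
      exact ConW.out hprev (hadjt (i + 1) hi hd) hc

theorem con_iff_exists_open_path (hAB : A ≠ B)
    (hP : ∀ u u' : V, ∀ l' : Bool, ∀ x : V, P u' l' x → P u true x)
    (hQ : ∀ x : V, ∀ rh' : Bool, ∀ w' w'' : V, Q x rh' w' → Q x true w'')
    (hAncE : ∀ a b : V, H.Edge a b → b ∈ Anc → a ∈ Anc) :
    (∃ u l, ConW H Anc P Q A B u l) ↔ ∃ p : GPath H A B, GOpen Anc P Q p := by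
  constructor
  · rintro ⟨u, l, h⟩
    obtain ⟨w, hw, -, -⟩ := conToWalk h
    exact openWalkToPath hAB hP hQ hAncE w.len w le_rfl hw
  · rintro ⟨p, hp⟩
    exact pathToCon p hp

end Generic4

section Instances

variable {V : Type}

/-- Non-collider left condition for d-separation. -/
def Pd (Z : Set V) : V → Bool → V → Prop := fun _ _ v => v ∉ Z

/-- Non-collider right condition for d-separation. -/
def Qd : V → Bool → V → Prop := fun _ _ _ => True

/-- Non-collider left condition for σ-separation. -/
def Ps (G : DiGraph V) (Z : Set V) : V → Bool → V → Prop :=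
  fun u l v => l = false → v ∈ Z → u ∈ G.scc v

/-- Non-collider right condition for σ-separation. -/
def Qs (G : DiGraph V) (Z : Set V) : V → Bool → V → Prop :=
  fun v rh w => rh = false → v ∈ Z → w ∈ G.scc v

variable {Ga G : DiGraph V} {Z : Set V} {A B : V}

theorem nodecond_d_iff (p : GPath Ga A B) (j : Fin p.k) :
    NodeCond (Ga.anc Z) (Pd Z) Qd (p.node j.castSucc.castSucc) (p.dir j.castSucc)
        (p.node j.succ.castSucc) (!p.dir j.succ) (p.node j.succ.succ) ↔
      ¬ ((p.isCollider j ∧ p.inner j ∉ Ga.anc Z) ∨ (¬ p.isCollider j ∧ p.inner j ∈ Z)) := by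
  cases hd1 : p.dir j.castSucc <;> cases hd2 : p.dir j.succ <;>
    simp [NodeCond, GPath.isCollider, GPath.inner, Pd, Qd, hd1, hd2]

theorem gopen_d_iff (p : GPath Ga A B) :
    GOpen (Ga.anc Z) (Pd Z) Qd p ↔ ¬ p.dBlocked Z := by
  rw [GPath.dBlocked, not_exists]
  exact forall_congr' fun j => nodecond_d_iff p j

theorem nodecond_s_iff (p : GPath G A B) (j : Fin p.k) :
    NodeCond (G.anc Z) (Ps G Z) (Qs G Z) (p.node j.castSucc.castSucc) (p.dir j.castSucc)
        (p.node j.succ.castSucc) (!p.dir j.succ) (p.node j.succ.succ) ↔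
      ¬ ((p.isCollider j ∧ p.inner j ∉ G.anc Z) ∨
        (¬ p.isCollider j ∧ p.inner j ∈ Z ∧
          ((p.dir j.succ = true ∧ p.node j.succ.succ ∉ G.scc (p.inner j)) ∨
           (p.dir j.castSucc = false ∧ p.node j.castSucc.castSucc ∉ G.scc (p.inner j))))) := by
  cases hd1 : p.dir j.castSucc <;> cases hd2 : p.dir j.succ <;>
    simp [NodeCond, GPath.isCollider, GPath.inner, Ps, Qs, hd1, hd2] <;>
    tauto

theorem gopen_s_iff (p : GPath G A B) :
    GOpen (G.anc Z) (Ps G Z) (Qs G Z) p ↔ ¬ p.sigmaBlocked Z := by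
  rw [GPath.sigmaBlocked, not_exists]
  exact forall_congr' fun j => nodecond_s_iff p j

theorem dSep_iff_no_con (hAB : A ≠ B) :
    Ga.dSep A B Z ↔ ¬ ∃ u l, ConW Ga (Ga.anc Z) (Pd Z) Qd A B u l := by
  rw [con_iff_exists_open_path hAB (fun u u' l' x h => h) (fun x rh' w' w'' h => trivial)
    (fun a b he hb => DiGraph.anc_of_edge he hb)]
  constructor
  · rintro h ⟨p, hp⟩
    exact (gopen_d_iff p).mp hp (h p)
  · intro h p
    by_contra hb
    exact h ⟨p, (gopen_d_iff p).mpr hb⟩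

theorem sigmaSep_iff_no_con (hAB : A ≠ B) :
    G.sigmaSep A B Z ↔ ¬ ∃ u l, ConW G (G.anc Z) (Ps G Z) (Qs G Z) A B u l := by
  rw [con_iff_exists_open_path hAB (fun u u' l' x h => by simp [Ps])
    (fun x rh' w' w'' h => by simp [Qs]) (fun a b he hb => DiGraph.anc_of_edge he hb)]
  constructor
  · rintro h ⟨p, hp⟩
    exact (gopen_s_iff p).mp hp (h p)
  · intro h p
    by_contra hb
    exact h ⟨p, (gopen_s_iff p).mpr hb⟩

end Instances

section Acy

variable {V : Type} {G Ga : DiGraph V} {Z : Set V}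

theorem acy_edge_into_scc (hGa : IsAcyclification G Ga) {e f : V} (he : G.Edge e f)
    (hef : f ∉ G.scc e) : ∀ c ∈ G.scc f, Ga.Edge e c := by
  intro c hc
  have hscc : G.scc c = G.scc f := DiGraph.scc_eq_of_mem hc
  have hef' : e ∉ G.scc c := by
    rw [hscc]
    exact fun h => hef (DiGraph.mem_scc_symm h)
  have hne : e ≠ c := fun h => hef' (h ▸ G.mem_scc_self e)
  exact (hGa.2.1 e c hne hef').mpr ⟨f, by rw [hscc]; exact G.mem_scc_self f, he⟩

theorem acy_edge_of_inter (hGa : IsAcyclification G Ga) {x y : V} (he : G.Edge x y)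
    (h : x ∉ G.scc y) : Ga.Edge x y :=
  acy_edge_into_scc hGa he (fun hh => h (DiGraph.mem_scc_symm hh)) y (G.mem_scc_self y)

theorem acy_edge_reach (hGa : IsAcyclification G Ga) {x y : V} (he : Ga.Edge x y) :
    G.reach x y := by
  by_cases h : x ∈ G.scc y
  · exact h.2
  · have hne : x ≠ y := fun h' => h (h' ▸ G.mem_scc_self y)
    obtain ⟨W, hW, hxw⟩ := (hGa.2.1 x y hne h).mp he
    exact Relation.ReflTransGen.head hxw hW.2

theorem acy_reach (hGa : IsAcyclification G Ga) {x y : V} (h : Ga.reach x y) :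
    G.reach x y := by
  induction h with
  | refl => exact G.reach_refl x
  | tail hr he ih => exact G.reach_trans ih (acy_edge_reach hGa he)

theorem acy_anc_sub (hGa : IsAcyclification G Ga) {v : V} (h : v ∈ Ga.anc Z) : v ∈ G.anc Z := by
  obtain ⟨s, hs, hr⟩ := h
  exact ⟨s, hs, acy_reach hGa hr⟩

theorem exists_scc_anc (hGa : IsAcyclification G Ga) {W : V} (hW : W ∈ G.anc Z) :
    ∃ c ∈ G.scc W, c ∈ Ga.anc Z := by
  obtain ⟨z, hz, hr⟩ := hW
  induction hr using Relation.ReflTransGen.head_induction_on with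
  | refl => exact ⟨z, G.mem_scc_self z, DiGraph.mem_anc_of_mem hz⟩
  | head he hr ih =>
    rename_i a c
    obtain ⟨c', hc'scc, hc'anc⟩ := ih
    by_cases hb : c ∈ G.scc a
    · rw [DiGraph.scc_eq_of_mem hb] at hc'scc
      exact ⟨c', hc'scc, hc'anc⟩
    · have hedge : Ga.Edge a c' := acy_edge_into_scc hGa he hb c' hc'scc
      exact ⟨a, G.mem_scc_self a, DiGraph.anc_of_edge hedge hc'anc⟩

theorem acy_tournament (hGa : IsAcyclification G Ga) {x y : V} (hxy : x ∈ G.scc y)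
    (hne : x ≠ y) : Ga.Edge x y ∨ Ga.Edge y x := by
  rcases hGa.2.2 x y hne hxy with ⟨h, -⟩ | ⟨h, -⟩
  · exact Or.inl h
  · exact Or.inr h

end Acy

section Sim

variable {V : Type}

/-- d-connectivity in the acyclification. -/
abbrev CD (Ga : DiGraph V) (Z : Set V) (A : V) (v u : V) (l : Bool) : Prop :=
  ConW Ga (Ga.anc Z) (Pd Z) Qd A v u l

/-- σ-connectivity in the original graph. -/
abbrev CS (G : DiGraph V) (Z : Set V) (A : V) (v u : V) (l : Bool) : Prop :=
  ConW G (G.anc Z) (Ps G Z) (Qs G Z) A v u l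

variable {G Ga : DiGraph V} {Z : Set V} {A : V}

theorem cd_out {v u w : V} {l : Bool} (h : CD Ga Z A v u l) (he : Ga.Edge v w)
    (hv : v ∉ Z) : CD Ga Z A w v true :=
  ConW.out h he ⟨fun hc => absurd hc.2 (by simp), fun _ => ⟨hv, trivial⟩⟩

theorem cd_inn_noncol {v u w : V} (h : CD Ga Z A v u false) (he : Ga.Edge w v)
    (hv : v ∉ Z) : CD Ga Z A w v false :=
  ConW.inn h he ⟨fun hc => absurd hc.1 (by simp), fun _ => ⟨hv, trivial⟩⟩

theorem cd_inn_col {v u w : V} (h : CD Ga Z A v u true) (he : Ga.Edge w v)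
    (hv : v ∈ Ga.anc Z) : CD Ga Z A w v false :=
  ConW.inn h he ⟨fun _ => hv, fun hc => absurd ⟨rfl, rfl⟩ hc⟩

theorem cs_out {v u w : V} {l : Bool} (h : CS G Z A v u l) (he : G.Edge v w)
    (hP : l = false → v ∈ Z → u ∈ G.scc v) (hw : w ∈ G.scc v ∨ v ∉ Z) :
    CS G Z A w v true :=
  ConW.out h he ⟨fun hc => absurd hc.2 (by simp),
    fun _ => ⟨hP, fun _ hv => hw.elim id (fun hnv => absurd hv hnv)⟩⟩

theorem cs_inn {v u w : V} {l : Bool} (h : CS G Z A v u l) (he : G.Edge w v)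
    (hcol : l = true → v ∈ G.anc Z) (hP : l = false → v ∈ Z → u ∈ G.scc v) :
    CS G Z A w v false :=
  ConW.inn h he ⟨fun hc => hcol hc.1, fun _ => ⟨hP, fun htf => absurd htf (by simp)⟩⟩

/-- Forward extension along a directed chain inside an SCC. -/
theorem cs_fwd {v t : V} (hchain : Relation.TransGen G.Edge v t) :
    ∀ {u : V} {l : Bool}, v ∈ G.scc t → CS G Z A v u l →
      (l = false → v ∈ Z → u ∈ G.scc v) →
      ∃ u', CS G Z A t u' true ∧ u' ∈ G.scc t := by
  induction hchain using Relation.TransGen.head_induction_on with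
  | single he =>
    rename_i x
    intro u l hx hc hP
    refine ⟨x, cs_out hc he hP (Or.inl ?_), hx⟩
    rw [DiGraph.scc_eq_of_mem hx]
    exact G.mem_scc_self t
  | head he hch ih =>
    rename_i x c
    intro u l hx hc hP
    have hcscc : c ∈ G.scc t :=
      ⟨G.reach_trans hx.1 (Relation.ReflTransGen.single he), hch.to_reflTransGen⟩
    have hcx : c ∈ G.scc x := by
      rw [DiGraph.scc_eq_of_mem hx]
      exact hcscc
    have hnext : CS G Z A c x true := cs_out hc he hP (Or.inl hcx)
    exact ih hcscc hnext (fun h => absurd h (by simp))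

/-- Backward extension along a reversed directed chain inside an SCC. -/
theorem cs_bwd {v : V} {u : V} {l : Bool} (hc : CS G Z A v u l)
    (hcol : l = true → v ∈ G.anc Z) (hP : l = false → v ∈ Z → u ∈ G.scc v) :
    ∀ {x : V}, Relation.ReflTransGen G.Edge x v → x ∈ G.scc v → ∀ {w : V}, G.Edge w x →
      ∃ q, CS G Z A w q false ∧ q ∈ G.scc v := by
  intro x hchain
  induction hchain using Relation.ReflTransGen.head_induction_on with
  | refl =>
    intro _ w he
    exact ⟨v, cs_inn hc he hcol hP, G.mem_scc_self v⟩
  | head he' hch ih =>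
    rename_i x' c
    intro hx w hw
    have hcscc : c ∈ G.scc v :=
      ⟨G.reach_trans hx.1 (Relation.ReflTransGen.single he'), hch⟩
    obtain ⟨q, hq, hqscc⟩ := ih hcscc he'
    refine ⟨x', cs_inn hq hw (fun h => absurd h (by simp)) ?_, hx⟩
    intro _ _
    rw [DiGraph.scc_eq_of_mem hx]
    exact hqscc

/-- Forward extension starting at `A`. -/
theorem cs_fwd0 {x t : V} (he : G.Edge A x) (hchain : Relation.ReflTransGen G.Edge x t)
    (hx : x ∈ G.scc t) : ∃ u', CS G Z A t u' true := by
  rcases Relation.reflTransGen_iff_eq_or_transGen.mp hchain with rfl | htg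
  · exact ⟨A, ConW.head he⟩
  · obtain ⟨u', h, -⟩ := cs_fwd htg hx (ConW.head he) (fun h => absurd h (by simp))
    exact ⟨u', h⟩

/-- Backward extension ending at `A`. -/
theorem cs_bwd0 {x : V} (hchain : Relation.ReflTransGen G.Edge x A) :
    x ∈ G.scc A → ∀ {w : V}, G.Edge w x → ∃ q, CS G Z A w q false ∧ q ∈ G.scc A := by
  induction hchain using Relation.ReflTransGen.head_induction_on with
  | refl =>
    intro _ w he
    exact ⟨A, ConW.tail he, G.mem_scc_self A⟩
  | head he' hch ih =>
    rename_i x' c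
    intro hx w hw
    have hcscc : c ∈ G.scc A :=
      ⟨G.reach_trans hx.1 (Relation.ReflTransGen.single he'), hch⟩
    obtain ⟨q, hq, hqscc⟩ := ih hcscc he'
    refine ⟨x', cs_inn hq hw (fun h => absurd h (by simp)) ?_, hx⟩
    intro _ _
    rw [DiGraph.scc_eq_of_mem hx]
    exact hqscc

/-- Main simulation, d-connectivity in `Ga` to σ-connectivity in `G`. -/
theorem dToS (hGa : IsAcyclification G Ga) {v u : V} {l : Bool}
    (h : CD Ga Z A v u l) : ∃ u', CS G Z A v u' l := by
  induction h with
  | head he =>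
    rename_i v'
    by_cases hin : A ∈ G.scc v'
    · have hne : A ≠ v' := fun h' => Ga.loopless _ (h' ▸ he)
      rcases Relation.reflTransGen_iff_eq_or_transGen.mp hin.2 with heq | htg
      · exact absurd heq.symm hne
      · obtain ⟨c, hAc, hcv⟩ := Relation.TransGen.head'_iff.mp htg
        have hcscc : c ∈ G.scc v' :=
          ⟨G.reach_trans hin.1 (Relation.ReflTransGen.single hAc), hcv⟩
        obtain ⟨u', h'⟩ := cs_fwd0 hAc hcv hcscc
        exact ⟨u', h'⟩
    · have hne : A ≠ v' := fun h' => Ga.loopless _ (h' ▸ he)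
      obtain ⟨W, hW, hAW⟩ := (hGa.2.1 A v' hne hin).mp he
      obtain ⟨u', h'⟩ := cs_fwd0 hAW hW.2 hW
      exact ⟨u', h'⟩
  | tail he =>
    rename_i v'
    by_cases hin : v' ∈ G.scc A
    · have hne : v' ≠ A := fun h' => Ga.loopless _ (h' ▸ he)
      rcases Relation.reflTransGen_iff_eq_or_transGen.mp hin.2 with heq | htg
      · exact absurd heq.symm hne
      · obtain ⟨c, hvc, hcA⟩ := Relation.TransGen.head'_iff.mp htg
        have hcscc : c ∈ G.scc A :=
          ⟨G.reach_trans hin.1 (Relation.ReflTransGen.single hvc), hcA⟩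
        obtain ⟨q, hq, -⟩ := cs_bwd0 hcA hcscc hvc
        exact ⟨q, hq⟩
    · have hne : v' ≠ A := fun h' => Ga.loopless _ (h' ▸ he)
      obtain ⟨W, hW, hvW⟩ := (hGa.2.1 v' A hne hin).mp he
      obtain ⟨q, hq, -⟩ := cs_bwd0 hW.2 hW hvW
      exact ⟨q, hq⟩
  | out hc he hn ih =>
    rename_i v' u' w' l'
    obtain ⟨u'', hs⟩ := ih
    have hvZ : v' ∉ Z := (hn.2 (fun hh => absurd hh.2 (by simp))).1
    have hPvac : l' = false → v' ∈ Z → u'' ∈ G.scc v' := fun _ hv => absurd hv hvZ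
    by_cases hin : v' ∈ G.scc w'
    · have hne : v' ≠ w' := fun h' => Ga.loopless _ (h' ▸ he)
      rcases Relation.reflTransGen_iff_eq_or_transGen.mp hin.2 with heq | htg
      · exact absurd heq.symm hne
      · obtain ⟨q, hq, -⟩ := cs_fwd htg hin hs hPvac
        exact ⟨q, hq⟩
    · have hne : v' ≠ w' := fun h' => Ga.loopless _ (h' ▸ he)
      obtain ⟨W, hW, hvW⟩ := (hGa.2.1 v' w' hne hin).mp he
      have hstep : CS G Z A W v' true := cs_out hs hvW hPvac (Or.inr hvZ)
      rcases Relation.reflTransGen_iff_eq_or_transGen.mp hW.2 with heq | htg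
      · subst heq
        exact ⟨v', hstep⟩
      · obtain ⟨q, hq, -⟩ := cs_fwd htg hW hstep (fun h => absurd h (by simp))
        exact ⟨q, hq⟩
  | inn hc he hn ih =>
    rename_i v' u' w' l'
    obtain ⟨u'', hs⟩ := ih
    have hcol : l' = true → v' ∈ G.anc Z := fun hl => acy_anc_sub hGa (hn.1 ⟨hl, rfl⟩)
    have hnZ : l' = false → v' ∉ Z := by
      intro hl
      exact (hn.2 (fun hh => by rw [hl] at hh; exact absurd hh.1 (by simp))).1
    have hPs : l' = false → v' ∈ Z → u'' ∈ G.scc v' := fun hl hv => absurd hv (hnZ hl)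
    by_cases hin : w' ∈ G.scc v'
    · have hne : w' ≠ v' := fun h' => Ga.loopless _ (h' ▸ he)
      rcases Relation.reflTransGen_iff_eq_or_transGen.mp hin.2 with heq | htg
      · exact absurd heq.symm hne
      · obtain ⟨c, hwc, hcv⟩ := Relation.TransGen.head'_iff.mp htg
        have hcscc : c ∈ G.scc v' :=
          ⟨G.reach_trans hin.1 (Relation.ReflTransGen.single hwc), hcv⟩
        obtain ⟨q, hq, -⟩ := cs_bwd hs hcol hPs hcv hcscc hwc
        exact ⟨q, hq⟩
    · have hne : w' ≠ v' := fun h' => Ga.loopless _ (h' ▸ he)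
      obtain ⟨W, hW, hwW⟩ := (hGa.2.1 w' v' hne hin).mp he
      obtain ⟨q, hq, -⟩ := cs_bwd hs hcol hPs hW.2 hW hwW
      exact ⟨q, hq⟩

end Sim

section Sim2

variable {V : Type} {G Ga : DiGraph V} {Z : Set V} {A : V}

/-- The simulation invariant for translating σ-connectivity into d-connectivity. -/
def SInv (G Ga : DiGraph V) (Z : Set V) (A v u : V) (l : Bool) : Prop :=
  ((∀ c ∈ G.scc v, ∃ t, CD Ga Z A c t true) ∧
    (l = false → ∃ c₀ ∈ G.scc v, c₀ ∈ Ga.anc Z)) ∨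
  (∃ s ∈ G.scc v, s ∉ Z ∧ ∃ p, CD Ga Z A s p false) ∨
  (A ∈ G.scc v) ∨
  (l = false ∧ u ∉ G.scc v ∧ ∃ p, CD Ga Z A v p false)

/-- From the invariant, if the current node avoids `Z`, the d-walk can be brought
to end at the current node (unless it is `A` itself, in the untouched case). -/
theorem sinv_pending (hGa : IsAcyclification G Ga) {v u : V} {l : Bool}
    (hinv : SInv G Ga Z A v u l) (hvZ : v ∉ Z) :
    v = A ∨ ∃ x lx, CD Ga Z A v x lx := by
  rcases hinv with ⟨hall, -⟩ | ⟨s, hs, hsZ, p, hp⟩ | hA | ⟨-, -, p, hp⟩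
  · obtain ⟨t, ht⟩ := hall v (G.mem_scc_self v)
    exact Or.inr ⟨t, true, ht⟩
  · by_cases hsv : s = v
    · subst hsv
      exact Or.inr ⟨p, false, hp⟩
    · rcases acy_tournament hGa hs hsv with he | he
      · exact Or.inr ⟨s, true, cd_out hp he hsZ⟩
      · exact Or.inr ⟨s, false, cd_inn_noncol hp he hsZ⟩
  · by_cases hvA : v = A
    · exact Or.inl hvA
    · rcases acy_tournament hGa hA (fun h => hvA h.symm) with he | he
      · exact Or.inr ⟨A, true, ConW.head he⟩
      · exact Or.inr ⟨A, false, ConW.tail he⟩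
  · exact Or.inr ⟨p, false, hp⟩

theorem sToD (hGa : IsAcyclification G Ga) {v u : V} {l : Bool}
    (h : CS G Z A v u l) : SInv G Ga Z A v u l := by
  induction h with
  | head he =>
    rename_i v'
    by_cases hin : A ∈ G.scc v'
    · exact Or.inr (Or.inr (Or.inl hin))
    · left
      refine ⟨?_, fun h => absurd h (by simp)⟩
      intro c hc
      have hv'A : v' ∉ G.scc A := fun h => hin (DiGraph.mem_scc_symm h)
      exact ⟨A, ConW.head (acy_edge_into_scc hGa he hv'A c hc)⟩
  | tail he =>
    rename_i v'
    by_cases hin : A ∈ G.scc v'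
    · exact Or.inr (Or.inr (Or.inl hin))
    · right; right; right
      refine ⟨rfl, hin, A, ?_⟩
      exact ConW.tail (acy_edge_of_inter hGa he (fun h => hin (DiGraph.mem_scc_symm h)))
  | out hc he hn ih =>
    rename_i v' u' w' l'
    have hPs : l' = false → v' ∈ Z → u' ∈ G.scc v' := (hn.2 (fun hh => absurd hh.2 (by simp))).1
    have hQs : v' ∈ Z → w' ∈ G.scc v' := fun hv =>
      (hn.2 (fun hh => absurd hh.2 (by simp))).2 rfl hv
    by_cases hin : w' ∈ G.scc v'
    · -- intra step: the SCC is unchanged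
      have hsccEq : G.scc w' = G.scc v' := DiGraph.scc_eq_of_mem hin
      rcases ih with ⟨hall, -⟩ | ⟨s, hs, hsZ, p, hp⟩ | hA | ⟨hl, hu, p, hp⟩
      · left
        refine ⟨by rw [hsccEq]; exact hall, fun h => absurd h (by simp)⟩
      · exact Or.inr (Or.inl ⟨s, by rw [hsccEq]; exact hs, hsZ, p, hp⟩)
      · exact Or.inr (Or.inr (Or.inl (by rw [hsccEq]; exact hA)))
      · -- the previous step entered this SCC pointing out; current node is now cleared
        have hvZ : v' ∉ Z := fun hv => hu (hPs hl hv)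
        exact Or.inr (Or.inl ⟨v', by rw [hsccEq]; exact G.mem_scc_self v', hvZ, p, hp⟩)
    · -- inter step: leaving the SCC through an edge out of `v'`
      have hvZ : v' ∉ Z := fun hv => hin (hQs hv)
      have hedge_all : ∀ c ∈ G.scc w', Ga.Edge v' c := acy_edge_into_scc hGa he hin
      left
      refine ⟨?_, fun h => absurd h (by simp)⟩
      intro c hcc
      rcases sinv_pending hGa ih hvZ with hvA | ⟨x, lx, hx⟩
      · exact ⟨v', hvA ▸ ConW.head (hedge_all c hcc)⟩
      · exact ⟨v', cd_out hx (hedge_all c hcc) hvZ⟩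
  | inn hc he hn ih =>
    rename_i v' u' w' l'
    have hcol : l' = true → v' ∈ G.anc Z := fun hl => hn.1 ⟨hl, rfl⟩
    have hPs : l' = false → v' ∈ Z → u' ∈ G.scc v' := by
      intro hl hv
      exact (hn.2 (fun hh => by rw [hl] at hh; exact absurd hh.1 (by simp))).1 hl hv
    by_cases hin : w' ∈ G.scc v'
    · -- intra step
      have hsccEq : G.scc w' = G.scc v' := DiGraph.scc_eq_of_mem hin
      rcases ih with ⟨hall, hc0⟩ | ⟨s, hs, hsZ, p, hp⟩ | hA | ⟨hl, hu, p, hp⟩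
      · left
        refine ⟨by rw [hsccEq]; exact hall, fun _ => ?_⟩
        cases hll : l' with
        | true =>
          obtain ⟨c₀, hc₀scc, hc₀anc⟩ := exists_scc_anc hGa (hcol hll)
          exact ⟨c₀, by rw [hsccEq]; exact hc₀scc, hc₀anc⟩
        | false =>
          obtain ⟨c₀, hc₀scc, hc₀anc⟩ := hc0 hll
          exact ⟨c₀, by rw [hsccEq]; exact hc₀scc, hc₀anc⟩
      · exact Or.inr (Or.inl ⟨s, by rw [hsccEq]; exact hs, hsZ, p, hp⟩)
      · exact Or.inr (Or.inr (Or.inl (by rw [hsccEq]; exact hA)))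
      · have hvZ : v' ∉ Z := fun hv => hu (hPs hl hv)
        exact Or.inr (Or.inl ⟨v', by rw [hsccEq]; exact G.mem_scc_self v', hvZ, p, hp⟩)
    · -- inter step: entering a new SCC through an edge pointing back into the old one
      have hv'w : v' ∉ G.scc w' := fun h => hin (DiGraph.mem_scc_symm h)
      have hedge_all : ∀ c ∈ G.scc v', Ga.Edge w' c := acy_edge_into_scc hGa he hv'w
      right; right; right
      refine ⟨rfl, hv'w, ?_⟩
      rcases ih with ⟨hall, hc0⟩ | ⟨s, hs, hsZ, p, hp⟩ | hA | ⟨hl, hu, p, hp⟩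
      · have hc₀ : ∃ c₀ ∈ G.scc v', c₀ ∈ Ga.anc Z := by
          cases hll : l' with
          | true => exact exists_scc_anc hGa (hcol hll)
          | false => exact hc0 hll
        obtain ⟨c₀, hc₀scc, hc₀anc⟩ := hc₀
        obtain ⟨t, ht⟩ := hall c₀ hc₀scc
        exact ⟨c₀, cd_inn_col ht (hedge_all c₀ hc₀scc) hc₀anc⟩
      · exact ⟨s, cd_inn_noncol hp (hedge_all s hs) hsZ⟩
      · exact ⟨A, ConW.tail (hedge_all A hA)⟩
      · have hvZ : v' ∉ Z := fun hv => hu (hPs hl hv)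
        exact ⟨v', cd_inn_noncol hp (hedge_all v' (G.mem_scc_self v')) hvZ⟩

end Sim2

/-- d-separation in any σ-acyclification coincides with
σ-separation in the original (possibly cyclic) graph. -/
theorem dSep_acyclification_iff_sigmaSep {V : Type} [Fintype V]
    (G Ga : DiGraph V) (hGa : IsAcyclification G Ga)
    (A B : V) (hAB : A ≠ B) (Z : Set V) (hAZ : A ∉ Z) (hBZ : B ∉ Z) :
    Ga.dSep A B Z ↔ G.sigmaSep A B Z := by
  rw [dSep_iff_no_con hAB, sigmaSep_iff_no_con hAB]
  apply not_congr
  constructor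
  · rintro ⟨u, l, h⟩
    obtain ⟨u', hs⟩ := dToS hGa h
    exact ⟨u', l, hs⟩
  · rintro ⟨u, l, h⟩
    rcases sinv_pending hGa (sToD hGa h) hBZ with hBA | ⟨x, lx, hx⟩
    · exact absurd hBA (fun h' => hAB h'.symm)
    · exact ⟨x, lx, hx⟩
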